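/- For all integers r ≥ 1, k_1,…,k_r ≥ 1 and l ≥ 1, letting w = x^{k_1-1}y x^{k_2-1}y ⋯ x^{k_r-1}y = z_{k_1}⋯z_{k_r}, one has δ_l(z·w) = z·(w * z_l); equivalently, x^{l-1}y·w + δ_l(w) = z_{k_1}⋯z_{k_r} * z_l. -/

import Mathlib

noncomputable section

namespace FMZVNote

/-- The noncommutative polynomial ring `𝔥 = ℚ⟨x,y⟩` in two indeterminates `x`, `y`. -/
abbrev H : Type := FreeAlgebra ℚ (Fin 2)

/-- The generator `x`. -/
def x : H := FreeAlgebra.ι ℚ 0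

/-- The generator `y`. -/
def y : H := FreeAlgebra.ι ℚ 1

/-- `z = x + y`. -/
def z : H := x + y

/-- `z_k = x^{k-1} y`. -/
def zk (k : ℕ) : H := x ^ (k - 1) * y

/-- The word `z_{k_1} ⋯ z_{k_r}` associated to an index `(k_1, …, k_r)`. -/
def zword (ks : List ℕ) : H := (ks.map zk).prod

/-- The harmonic product `z_{k_1}⋯z_{k_r} * z_{l_1}⋯z_{l_s}` of two words, determined by
`1*w = w*1 = w` and
`z_k w₁ * z_l w₂ = z_k (w₁ * z_l w₂) + z_l (z_k w₁ * w₂) + z_{k+l} (w₁ * w₂)`. -/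
def hprod : List ℕ → List ℕ → H
  | [], w => zword w
  | k :: w1, [] => zword (k :: w1)
  | k :: w1, l :: w2 =>
      zk k * hprod w1 (l :: w2) + zk l * hprod (k :: w1) w2
        + zk (k + l) * hprod w1 w2
  termination_by w1 w2 => w1.length + w2.length

lemma hprod_nil (w : List ℕ) : hprod w [] = zword w := by
  cases w <;> simp [hprod]

lemma hprod_cons (k l : ℕ) (w1 : List ℕ) :
    hprod (k :: w1) [l]
      = zk k * hprod w1 [l] + zk l * zword (k :: w1) + zk (k + l) * zword w1 := by
  rw [hprod, hprod_nil, hprod_nil]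

/-- For `w = z_{k_1}⋯z_{k_r}`, one has `δ_l(z·w) = z·(w * z_l)`. -/
theorem delta_of_z_mul_word
    (ks : List ℕ) (hne : ks ≠ []) (h1 : ∀ k ∈ ks, 1 ≤ k)
    (l : ℕ) (hl : 1 ≤ l)
    (D : H →ₗ[ℚ] H)
    (hDleibniz : ∀ a b : H, D (a * b) = D a * b + a * D b)
    (hDx : D x = 0) (hDy : D y = z * x ^ (l - 1) * y)
    :
    D (z * zword ks) = z * hprod ks [l] := by
  have hD1 : D 1 = 0 := by
    simpa using hDleibniz 1 1
  have hDpow : ∀ n : ℕ, D (x ^ n) = 0 := by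
    intro n
    induction n with
    | zero => simpa using hD1
    | succ n ih => rw [pow_succ, hDleibniz, ih, hDx]; simp
  have hDzk : ∀ k : ℕ, D (zk k) = x ^ (k - 1) * (z * x ^ (l - 1) * y) := by
    intro k
    rw [zk, hDleibniz, hDpow, hDy]
    simp
  have key : ∀ k : ℕ, 1 ≤ k →
      x ^ (k - 1) * (z * x ^ (l - 1) * y) = zk (k + l) + zk k * zk l := by
    intro k hk
    have e : x ^ (k - 1) * (z * x ^ (l - 1) * y)
        = x ^ (k - 1) * x * x ^ (l - 1) * y + x ^ (k - 1) * y * (x ^ (l - 1) * y) := by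
      simp [z, add_mul, mul_add, mul_assoc]
    rw [e]
    have e2 : x ^ (k - 1) * x * x ^ (l - 1) = x ^ (k + l - 1) := by
      rw [← pow_succ, ← pow_add]
      congr 1
      omega
    rw [e2]
    simp [zk, mul_assoc]
  have Dword : ∀ ks : List ℕ, (∀ k ∈ ks, 1 ≤ k) →
      D (zword ks) = hprod ks [l] - zk l * zword ks := by
    intro ks hks
    induction ks with
    | nil => simp [zword, hprod, hD1]
    | cons k w1 ih =>
      have hk : 1 ≤ k := hks k List.mem_cons_self
      have hw1 : ∀ m ∈ w1, 1 ≤ m := fun m hm => hks m (List.mem_cons_of_mem _ hm)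
      have hz : zword (k :: w1) = zk k * zword w1 := by simp [zword]
      rw [hz, hDleibniz, hDzk, key k hk, ih hw1]
      show (zk (k + l) + zk k * zk l) * zword w1
          + zk k * (hprod w1 [l] - zk l * zword w1)
          = hprod (k :: w1) [l] - zk l * (zk k * zword w1)
      rw [hprod_cons, hz]
      noncomm_ring
  have hDz : D z = z * zk l := by
    rw [z, map_add, hDx, hDy]
    simp only [zero_add, zk, z, mul_assoc]
  rw [hDleibniz, hDz, Dword ks h1]
  noncomm_ring
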